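/- arXiv:2310.17111 — 3 statements merged into one kernel-verified Lean document; each statement's English description precedes it below -/
import Mathlib

section
/- Let p₂ and q be real numbers with 0 < p₂ < 1 and 0 < q < 1, and define f(x) = (1 - (1-p₂)^x)·(1-q)^(x-1) for real x ≥ 1. If (1-q) / ((1-q)(1-p₂))^((1-p₂)^2) > 1, then there exists a real number x₀ > 2 such that f is strictly monotone increasing on the interval [1, x₀] and strictly monotone decreasing on the interval [x₀, ∞). -/
/-- Proposition 1: the survival probability
`f x = (1 - (1-p₂)^x) * (1-q)^(x-1)` (real exponents) of an armed civilian who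
fights back, as a function of the number `x ≥ 1` of armed civilians who fight,
first strictly increases and then strictly decreases, provided
`(1-q) / ((1-q)(1-p₂))^((1-p₂)^2) > 1`. -/
theorem stmt_0 (p₂ q : ℝ) (hp₂ : 0 < p₂) (hp₂' : p₂ < 1) (hq : 0 < q) (hq' : q < 1)
    (f : ℝ → ℝ)
    (hf : ∀ x : ℝ, 1 ≤ x → f x = (1 - (1 - p₂) ^ x) * (1 - q) ^ (x - 1))
    (hcond : (1 - q) / ((1 - q) * (1 - p₂)) ^ ((1 - p₂) ^ 2) > 1) :
    ∃ x₀ : ℝ, x₀ > 2 ∧ StrictMonoOn f (Set.Icc 1 x₀) ∧ StrictAntiOn f (Set.Ici x₀) := by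
  set a := 1 - p₂ with ha_def
  set b := 1 - q with hb_def
  have ha0 : 0 < a := by simp [ha_def]; linarith
  have ha1 : a < 1 := by simp [ha_def]; linarith
  have hb0 : 0 < b := by simp [hb_def]; linarith
  have hb1 : b < 1 := by simp [hb_def]; linarith
  set la := Real.log a with hla_def
  set lb := Real.log b with hlb_def
  have hla : la < 0 := Real.log_neg ha0 ha1
  have hlb : lb < 0 := Real.log_neg hb0 hb1
  have hab : la + lb < 0 := by linarith
  set g : ℝ → ℝ := fun x => lb - Real.exp (x * la) * (la + lb) with hg_def
  have hba : 0 < b * a := mul_pos hb0 ha0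
  -- condition gives g 2 > 0
  have hcond' : (b * a) ^ ((a : ℝ) ^ 2) < b := by
    have h1 : 0 < (b * a) ^ ((a : ℝ) ^ 2 : ℝ) := Real.rpow_pos_of_pos hba _
    rw [gt_iff_lt, lt_div_iff₀ h1, one_mul] at hcond
    exact hcond
  have hg2 : 0 < g 2 := by
    have hlog : ((a : ℝ) ^ 2) * Real.log (b * a) < lb := by
      have h := Real.log_lt_log (Real.rpow_pos_of_pos hba _) hcond'
      rwa [Real.log_rpow hba] at h
    have hlba : Real.log (b * a) = lb + la :=
      Real.log_mul (ne_of_gt hb0) (ne_of_gt ha0)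
    have hexp : Real.exp (2 * la) = a ^ 2 := by
      have h := Real.exp_log ha0
      rw [two_mul, Real.exp_add, h]; ring
    simp only [hg_def]
    rw [hexp]
    rw [hlba] at hlog
    nlinarith [hlog]
  -- g is strictly antitone
  have hganti : StrictAnti g := by
    intro x y hxy
    have h1 : Real.exp (y * la) < Real.exp (x * la) := by
      apply Real.exp_lt_exp.mpr
      nlinarith
    simp only [hg_def]
    nlinarith [mul_pos (sub_pos.mpr h1) (neg_pos.mpr hab)]
  -- find X with g X < 0
  set c := lb / (la + lb) with hc_def
  have hc0 : 0 < c := div_pos_of_neg_of_neg hlb hab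
  set X := Real.log c / la + 1 with hX_def
  have hgX : g X < 0 := by
    have hXla : X * la < Real.log c := by
      have h : (Real.log c / la) * la = Real.log c := div_mul_cancel₀ _ (ne_of_lt hla)
      simp only [hX_def]
      nlinarith
    have h2 : Real.exp (X * la) < c :=
      (Real.exp_log hc0) ▸ Real.exp_lt_exp.mpr hXla
    have h3 : lb < Real.exp (X * la) * (la + lb) := by
      rw [hc_def] at h2
      exact (lt_div_iff_of_neg hab).mp h2
    simp only [hg_def]
    linarith
  have h2X : (2 : ℝ) < X := by
    by_contra h
    push_neg at h
    have := hganti.antitone h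
    linarith
  have hcont : Continuous g :=
    continuous_const.sub ((Real.continuous_exp.comp
      (continuous_id.mul continuous_const)).mul continuous_const)
  obtain ⟨x₀, hx₀mem, hgx₀⟩ : ∃ x₀ ∈ Set.Icc (2 : ℝ) X, g x₀ = 0 := by
    have h := intermediate_value_Icc' (le_of_lt h2X) hcont.continuousOn
    have h0 : (0 : ℝ) ∈ Set.Icc (g X) (g 2) := ⟨le_of_lt hgX, le_of_lt hg2⟩
    obtain ⟨x₀, hmem, heq⟩ := h h0
    exact ⟨x₀, hmem, heq⟩
  have hx₀gt2 : x₀ > 2 := by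
    rcases lt_or_eq_of_le hx₀mem.1 with h | h
    · exact h
    · exfalso; rw [← h] at hgx₀; linarith
  -- the smooth model function
  set F : ℝ → ℝ := fun x => (1 - Real.exp (x * la)) * Real.exp ((x - 1) * lb) with hF_def
  have hFderiv : ∀ x : ℝ, HasDerivAt F (Real.exp ((x - 1) * lb) * g x) x := by
    intro x
    have h1 : HasDerivAt (fun x : ℝ => Real.exp (x * la)) (Real.exp (x * la) * la) x := by
      have h := (Real.hasDerivAt_exp (x * la)).comp x ((hasDerivAt_id x).mul_const la)
      rw [one_mul] at h
      exact h
    have h2 : HasDerivAt (fun x : ℝ => Real.exp ((x - 1) * lb)) (Real.exp ((x - 1) * lb) * lb) x := by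
      have h := (Real.hasDerivAt_exp ((x - 1) * lb)).comp x
        (((hasDerivAt_id x).sub_const 1).mul_const lb)
      rw [one_mul] at h
      exact h
    have h3 := ((hasDerivAt_const x (1 : ℝ)).sub h1).mul h2
    refine h3.congr_deriv ?_
    simp only [hg_def, Pi.sub_apply]
    ring
  have hFcont : Continuous F :=
    (continuous_const.sub (Real.continuous_exp.comp
      (continuous_id.mul continuous_const))).mul
      (Real.continuous_exp.comp ((continuous_id.sub continuous_const).mul continuous_const))
  have hmono : StrictMonoOn F (Set.Icc 1 x₀) := by
    apply strictMonoOn_of_deriv_pos (convex_Icc 1 x₀) hFcont.continuousOn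
    intro x hx
    rw [interior_Icc] at hx
    rw [(hFderiv x).deriv]
    have hgx : 0 < g x := by
      have h := hganti hx.2
      rw [hgx₀] at h
      exact h
    exact mul_pos (Real.exp_pos _) hgx
  have hanti : StrictAntiOn F (Set.Ici x₀) := by
    apply strictAntiOn_of_deriv_neg (convex_Ici x₀) hFcont.continuousOn
    intro x hx
    rw [interior_Ici] at hx
    rw [(hFderiv x).deriv]
    have hgx : g x < 0 := by
      have h := hganti hx
      rw [hgx₀] at h
      exact h
    exact mul_neg_of_pos_of_neg (Real.exp_pos _) hgx
  have hFf : ∀ x : ℝ, 1 ≤ x → f x = F x := by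
    intro x hx
    rw [hf x hx]
    simp only [hF_def]
    rw [Real.rpow_def_of_pos ha0, Real.rpow_def_of_pos hb0]
    rw [mul_comm (Real.log a) x, mul_comm (Real.log b) (x - 1), ← hla_def, ← hlb_def]
  refine ⟨x₀, hx₀gt2, ?_, ?_⟩
  · intro x hx y hy hxy
    rw [hFf x hx.1, hFf y hy.1]
    exact hmono hx hy hxy
  · intro x hx y hy hxy
    have hx1 : (1 : ℝ) ≤ x := le_trans (by linarith) hx
    have hy1 : (1 : ℝ) ≤ y := le_trans (by linarith) hy
    rw [hFf x hx1, hFf y hy1]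
    exact hanti hx hy hxy
end

section
/- Let p₂ and q be real numbers with 0 < p₂ < 1 and 0 < q < 1, and define f(x) = (1 - (1-p₂)^x)·(1-q)^(x-1) for real x. Then for every real x, the derivative satisfies f'(x) > 0 if and only if (1-q) > ((1-q)(1-p₂))^((1-p₂)^x). -/
/-- Sign characterization of the derivative from the proof of Proposition 1:
for `f x = (1 - (1-p₂)^x) * (1-q)^(x-1)`, one has `f'(x) > 0` iff
`(1-q) > ((1-q)(1-p₂))^((1-p₂)^x)`. -/
theorem stmt_2 (p₂ q : ℝ) (hp₂ : 0 < p₂) (hp₂' : p₂ < 1) (hq : 0 < q) (hq' : q < 1)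
    (f : ℝ → ℝ)
    (hf : ∀ x : ℝ, f x = (1 - (1 - p₂) ^ x) * (1 - q) ^ (x - 1)) :
    ∀ x : ℝ, 0 < deriv f x ↔ (1 - q) > ((1 - q) * (1 - p₂)) ^ ((1 - p₂) ^ x) := by
  set a := 1 - p₂ with ha_def
  set b := 1 - q with hb_def
  have ha : 0 < a := by simp [ha_def]; linarith
  have hb : 0 < b := by simp [hb_def]; linarith
  intro x
  -- compute the derivative
  have h1 : HasDerivAt (fun x : ℝ => 1 - a ^ x) (-(a ^ x * Real.log a)) x :=
    ((Real.hasStrictDerivAt_const_rpow ha x).hasDerivAt).const_sub 1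
  have h2 : HasDerivAt (fun x : ℝ => b ^ (x - 1)) (b ^ (x - 1) * Real.log b) x := by
    have := ((Real.hasStrictDerivAt_const_rpow hb (x - 1)).hasDerivAt).comp x
      ((hasDerivAt_id x).sub_const 1)
    simpa [Function.comp_def] using this
  have hD : HasDerivAt f
      ((-(a ^ x * Real.log a)) * b ^ (x - 1) + (1 - a ^ x) * (b ^ (x - 1) * Real.log b)) x := by
    have := h1.mul h2
    have hfe : f = fun x : ℝ => (1 - a ^ x) * b ^ (x - 1) := funext hf
    rw [hfe]; exact this
  rw [hD.deriv]
  have hbx : 0 < b ^ (x - 1) := Real.rpow_pos_of_pos hb _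
  have key : (-(a ^ x * Real.log a)) * b ^ (x - 1) + (1 - a ^ x) * (b ^ (x - 1) * Real.log b)
      = b ^ (x - 1) * (Real.log b - a ^ x * Real.log (b * a)) := by
    rw [Real.log_mul (ne_of_gt hb) (ne_of_gt ha)]; ring
  rw [key]
  have hab : (0:ℝ) < b * a := mul_pos hb ha
  rw [mul_pos_iff_of_pos_left hbx, sub_pos, gt_iff_lt,
    Real.rpow_def_of_pos hab, ← Real.exp_log hb, Real.exp_lt_exp, Real.exp_log hb]
  rw [mul_comm]
end

section
/- Let p₂ and q be real numbers with 0 < p₂ < 1 and 0 < q < 1, and for positive integers K define g(K) = (1 - (1-p₂)^K)·(1-q)^(K-1). If (1-q) / ((1-q)(1-p₂))^((1-p₂)^2) > 1, then there exists a real number x₀ > 2 such that for every positive integer K: if K + 1 ≤ x₀ then g(K+1) > g(K), and if K ≥ x₀ then g(K+1) < g(K); that is, g first increases and then decreases. -/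
set_option maxHeartbeats 1600000 in
/-- Discrete form of Proposition 1: the survival probability
`g K = (1 - (1-p₂)^K) * (1-q)^(K-1)` of an armed civilian who fights back,
as a function of the number `K ≥ 1` of armed civilians who fight, first
increases and then decreases, provided `(1-q)/((1-q)(1-p₂))^((1-p₂)^2) > 1`. -/
theorem stmt_5 (p₂ q : ℝ) (hp₂ : 0 < p₂) (hp₂' : p₂ < 1) (hq : 0 < q) (hq' : q < 1)
    (g : ℕ → ℝ)
    (hg : ∀ K : ℕ, 1 ≤ K → g K = (1 - (1 - p₂) ^ (K : ℝ)) * (1 - q) ^ ((K : ℝ) - 1))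
    (hcond : (1 - q) / ((1 - q) * (1 - p₂)) ^ ((1 - p₂) ^ 2) > 1) :
    ∃ x₀ : ℝ, x₀ > 2 ∧
      ∀ K : ℕ, 1 ≤ K →
        (((K : ℝ) + 1 ≤ x₀ → g K < g (K + 1)) ∧ ((x₀ ≤ (K : ℝ)) → g (K + 1) < g K)) := by
  classical
  set a : ℝ := 1 - p₂ with ha_def
  set b : ℝ := 1 - q with hb_def
  have ha0 : 0 < a := by simp [ha_def]; linarith
  have ha1 : a < 1 := by simp [ha_def]; linarith
  have hb0 : 0 < b := by simp [hb_def]; linarith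
  have hb1 : b < 1 := by simp [hb_def]; linarith
  have hab0 : 0 < a * b := mul_pos ha0 hb0
  have hab1 : a * b < 1 := by nlinarith
  -- logarithmic form of the condition
  have hrp : (b * a) ^ (a ^ 2 : ℝ) < b := by
    rw [gt_iff_lt, lt_div_iff₀ (Real.rpow_pos_of_pos (by nlinarith : (0:ℝ) < b * a) _)] at hcond
    linarith
  have hlog1 : (a ^ 2 : ℝ) * (Real.log b + Real.log a) < Real.log b := by
    have h := Real.log_lt_log (Real.rpow_pos_of_pos (by nlinarith : (0:ℝ) < b * a) _) hrp
    rwa [Real.log_rpow (by nlinarith : (0:ℝ) < b * a),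
      Real.log_mul hb0.ne' ha0.ne'] at h
  -- key elementary inequality : a² log a + (1-a²) log (1+a) ≥ 0
  have h1a : (0:ℝ) < 1 + a := by linarith
  have hla : 1 - 1/a ≤ Real.log a := by
    have h := Real.log_le_sub_one_of_pos (inv_pos.mpr ha0)
    rw [Real.log_inv] at h
    have : a⁻¹ = 1/a := (one_div a).symm
    linarith
  have hlc : a / (1 + a) ≤ Real.log (1 + a) := by
    have h := Real.log_le_sub_one_of_pos (inv_pos.mpr h1a)
    rw [Real.log_inv] at h
    have he : (1 + a)⁻¹ - 1 = -(a / (1 + a)) := by field_simp; ring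
    linarith
  have hkey : 0 ≤ a ^ 2 * Real.log a + (1 - a ^ 2) * Real.log (1 + a) := by
    have e1 : a ^ 2 - a ≤ a ^ 2 * Real.log a := by
      have e3 : a ^ 2 - a = a ^ 2 * (1 - 1/a) := by field_simp
      rw [e3]
      exact mul_le_mul_of_nonneg_left hla (sq_nonneg a)
    have e2 : a - a ^ 2 ≤ (1 - a ^ 2) * Real.log (1 + a) := by
      have e4 : a - a ^ 2 = (1 - a ^ 2) * (a / (1 + a)) := by field_simp; ring
      rw [e4]
      exact mul_le_mul_of_nonneg_left hlc (by nlinarith)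
    linarith
  have ha2 : a ^ 2 < 1 := by nlinarith
  have hsum : 0 < Real.log b + Real.log (1 + a) := by nlinarith
  have hb1a : 1 < b * (1 + a) := by
    have he : b * (1 + a) = Real.exp (Real.log b + Real.log (1 + a)) := by
      rw [Real.exp_add, Real.exp_log hb0, Real.exp_log h1a]
    rw [he]
    calc (1:ℝ) = Real.exp 0 := Real.exp_zero.symm
    _ < _ := Real.exp_lt_exp.mpr hsum
  -- the discrete increment function
  have hφ1 : 0 < (b - 1) + a ^ 1 * (1 - a * b) := by
    have := mul_pos (by linarith : (0:ℝ) < 1 - a) (by linarith : (0:ℝ) < b * (1 + a) - 1)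
    nlinarith
  have hφ0 : 0 < (b - 1) + a ^ 0 * (1 - a * b) := by
    have := mul_pos hb0 (by linarith : (0:ℝ) < 1 - a)
    nlinarith
  have hanti : ∀ k l : ℕ, k < l →
      (b - 1) + a ^ l * (1 - a * b) < (b - 1) + a ^ k * (1 - a * b) := by
    intro k l hkl
    have h1 : a ^ l < a ^ k := pow_lt_pow_right_of_lt_one₀ ha0 ha1 hkl
    have := mul_lt_mul_of_pos_right h1 (by linarith : (0:ℝ) < 1 - a * b)
    linarith
  have hexists : ∃ K : ℕ, (b - 1) + a ^ K * (1 - a * b) < 0 := by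
    obtain ⟨n, hn⟩ := exists_pow_lt_of_lt_one
      (div_pos (by linarith : (0:ℝ) < 1 - b) (by linarith : (0:ℝ) < 1 - a * b)) ha1
    rw [lt_div_iff₀ (by linarith : (0:ℝ) < 1 - a * b)] at hn
    exact ⟨n, by linarith⟩
  obtain ⟨m, hm, hmin'⟩ : ∃ m : ℕ, ((b - 1) + a ^ m * (1 - a * b) < 0) ∧
      ∀ k, k < m → ¬ ((b - 1) + a ^ k * (1 - a * b) < 0) :=
    ⟨Nat.find hexists, Nat.find_spec hexists, fun k hk => Nat.find_min hexists hk⟩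
  have hmin : ∀ k, k < m → 0 ≤ (b - 1) + a ^ k * (1 - a * b) :=
    fun k hk => le_of_not_gt (hmin' k hk)
  have hm2 : 2 ≤ m := by
    by_contra h
    interval_cases m <;> linarith
  -- rewrite g with natural powers
  have hg' : ∀ K : ℕ, 1 ≤ K → g K = (1 - a ^ K) * b ^ (K - 1) := by
    intro K hK
    rw [hg K hK]
    rw [show ((K:ℝ) - 1) = ((K - 1 : ℕ) : ℝ) by
      rw [Nat.cast_sub hK]; norm_num]
    rw [Real.rpow_natCast, Real.rpow_natCast]
  have hdiff : ∀ j : ℕ, g (j + 1 + 1) - g (j + 1)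
      = b ^ j * ((b - 1) + a ^ (j + 1) * (1 - a * b)) := by
    intro j
    rw [hg' (j + 1) (by omega), hg' (j + 1 + 1) (by omega)]
    simp only [Nat.add_sub_cancel]
    ring
  refine ⟨max ((m : ℝ) - 1/2) (5/2), lt_of_lt_of_le (by norm_num) (le_max_right _ _), ?_⟩
  intro K hK
  obtain ⟨j, rfl⟩ : ∃ j, K = j + 1 := ⟨K - 1, by omega⟩
  have hbj : (0:ℝ) < b ^ j := pow_pos hb0 j
  constructor
  · intro hle
    have hφpos : 0 < (b - 1) + a ^ (j + 1) * (1 - a * b) := by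
      rcases Nat.eq_zero_or_pos j with hj | hj
      · subst hj; simpa using hφ1
      · have hjm2 : j + 2 < m := by
          rcases le_max_iff.mp hle with h | h
          · push_cast at h
            have : ((j:ℝ) + 2) < (m:ℝ) := by linarith
            exact_mod_cast this
          · exfalso
            push_cast at h
            have h1 : (1:ℝ) ≤ (j:ℝ) := by exact_mod_cast hj
            linarith
        have hjm : j + 1 < m - 1 := by omega
        have := hanti (j + 1) (m - 1) hjm
        have := hmin (m - 1) (by omega)
        linarith
    have hd := hdiff j
    have := mul_pos hbj hφpos
    linarith
  · intro hge
    have hmj : m ≤ j + 1 := by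
      have h := le_trans (le_max_left ((m : ℝ) - 1/2) (5/2)) hge
      have h2 : (m : ℝ) < (j:ℝ) + 1 + 1 := by push_cast at h ⊢; linarith
      have h3 : m < j + 1 + 1 := by exact_mod_cast h2
      omega
    have hφneg : (b - 1) + a ^ (j + 1) * (1 - a * b) < 0 := by
      rcases eq_or_lt_of_le hmj with h | h
      · rw [← h]; exact hm
      · have := hanti m (j + 1) h
        linarith
    have hd := hdiff j
    have := mul_neg_of_pos_of_neg hbj hφneg
    linarith
end
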